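/- (Correctness of the main algorithm) Let X_1,…,X_n be an SLP representing T = val(X_n) and let q ≥ 2. Then for every q-gram P ∈ Σ^q, |Occ(T, P)| = Σ_{i : X_i = X_ℓ X_r} vOcc(X_i)·|Occ(t_i, P)|, where the sum ranges over all variables X_i whose rule is a concatenation X_i = X_ℓ X_r. -/

import Mathlib

/-- The substring `S[u:v]` (1-indexed, inclusive; empty if `v < u`). -/
def substr {α : Type*} (S : List α) (u v : ℕ) : List α := (S.drop (u - 1)).take (v + 1 - u)

/-- `pre(S,q) = S[1:min(q,|S|)]`, the length-`q` prefix of `S`. -/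
def pre {α : Type*} (S : List α) (q : ℕ) : List α := S.take q

/-- `suf(S,q) = S[max(1,|S|-q+1):|S|]`, the length-`q` suffix of `S`. -/
def suf {α : Type*} (S : List α) (q : ℕ) : List α := S.drop (S.length - q)

/-- `Occ(T,P) = {k ≥ 1 : T[k:k+|P|-1] = P}`. -/
def Occ {α : Type*} (T P : List α) : Set ℕ := {k | 1 ≤ k ∧ substr T k (k + P.length - 1) = P}

/-- A straight-line program of size `n`: each variable `X_i` (0-indexed here) is either a
terminal `a ∈ Σ` or a concatenation `X_ℓ X_r` with `ℓ, r < i`. -/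
structure SLP (α : Type*) (n : ℕ) where
  rule : Fin n → α ⊕ (Fin n × Fin n)
  wf : ∀ i l r, rule i = Sum.inr (l, r) → l < i ∧ r < i

namespace SLP

variable {α : Type*} {n : ℕ}

/-- The string `val(X_i)` derived by variable `X_i`. -/
def val (S : SLP α n) : Fin n → List α
  | i =>
    match h : S.rule i with
    | Sum.inl a => [a]
    | Sum.inr (l, r) => S.val l ++ S.val r
termination_by i => i.val
decreasing_by
  · exact (S.wf i l r h).1
  · exact (S.wf i l r h).2

/-- The set `itv(X_i)` of occurrence intervals of `X_i` in the derivation of `T = val(X_n)`. -/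
def itv (S : SLP α n) : Fin n → Set (ℕ × ℕ)
  | i =>
    if i.val = n - 1 then {(1, (S.val i).length)}
    else
      {p | ∃ k l, ∃ h : S.rule k = Sum.inr (l, i),
          ∃ uv ∈ S.itv k, p = (uv.1 + (S.val l).length, uv.2)} ∪
      {p | ∃ k r, ∃ h : S.rule k = Sum.inr (i, r),
          ∃ uv ∈ S.itv k, p = (uv.1, uv.1 + (S.val i).length - 1)}
termination_by i => n - i.val
decreasing_by
  · have h1 : (i : ℕ) < (k : ℕ) := (S.wf k l i h).2
    have h2 : (k : ℕ) < n := k.isLt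
    omega
  · have h1 : (i : ℕ) < (k : ℕ) := (S.wf k i r h).1
    have h2 : (k : ℕ) < n := k.isLt
    omega

/-- `vOcc(X_i) = |itv(X_i)|`. -/
noncomputable def vOcc (S : SLP α n) (i : Fin n) : ℕ := (S.itv i).ncard

end SLP

namespace SLP

/-- For a concatenation variable `X_i = X_ℓ X_r`, the string
`t_i = suf(val(X_ℓ), q-1) · pre(val(X_r), q-1)` (and `[]` for terminal variables). -/
def tstr {α : Type*} {n : ℕ} (S : SLP α n) (q : ℕ) (i : Fin n) : List α :=
  match S.rule i with
  | Sum.inl _ => []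
  | Sum.inr (l, r) => suf (S.val l) (q - 1) ++ pre (S.val r) (q - 1)

end SLP

namespace SLPAux

variable {α : Type*} {n : ℕ}

theorem val_inl (S : SLP α n) {i : Fin n} {a : α} (h : S.rule i = Sum.inl a) :
    S.val i = [a] := by
  rw [SLP.val]; split <;> simp_all

theorem val_inr (S : SLP α n) {i l r : Fin n} (h : S.rule i = Sum.inr (l, r)) :
    S.val i = S.val l ++ S.val r := by
  rw [SLP.val]; split <;> simp_all

theorem val_pos (S : SLP α n) (i : Fin n) : 0 < (S.val i).length := by
  cases h : S.rule i with
  | inl a => simp [val_inl S h]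
  | inr p =>
    obtain ⟨l, r⟩ := p
    have hl := val_pos S l
    rw [val_inr S h]
    simp only [List.length_append]
    omega
termination_by i.val
decreasing_by exact (S.wf i l r h).1

/-- One derivation step: from an occurrence of a variable to an occurrence of a child. -/
def Step (S : SLP α n) (x y : Fin n × ℕ) : Prop :=
  ∃ l r, S.rule x.1 = Sum.inr (l, r) ∧
    (y = (l, x.2) ∨ y = (r, x.2 + (S.val l).length))

/-- Reachability of occurrences. -/
def RT (S : SLP α n) (x y : Fin n × ℕ) : Prop := Relation.ReflTransGen (Step S) x y

theorem step_lt {S : SLP α n} {x y : Fin n × ℕ} (h : Step S x y) : y.1.val < x.1.val := by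
  obtain ⟨l, r, hr, hy | hy⟩ := h <;> subst hy
  · exact (S.wf _ _ _ hr).1
  · exact (S.wf _ _ _ hr).2

theorem rt_fst_le {S : SLP α n} {x y : Fin n × ℕ} (h : RT S x y) : y.1.val ≤ x.1.val := by
  induction h with
  | refl => exact le_refl _
  | tail _ hstep ih => exact le_trans (le_of_lt (step_lt hstep)) ih

theorem rt_eq_of_fst {S : SLP α n} {x y : Fin n × ℕ} (h : RT S x y)
    (hf : x.1.val ≤ y.1.val) : y = x := by
  rcases h.cases_tail with h1 | ⟨c, hc, hstep⟩
  · exact h1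
  · have := step_lt hstep
    have := rt_fst_le hc
    omega

theorem rt_nest {S : SLP α n} {x y : Fin n × ℕ} (h : RT S x y) :
    x.2 ≤ y.2 ∧ y.2 + (S.val y.1).length ≤ x.2 + (S.val x.1).length := by
  induction h with
  | refl => exact ⟨le_refl _, le_refl _⟩
  | tail _ hstep ih =>
    obtain ⟨l, r, hr, hy | hy⟩ := hstep <;> subst hy <;>
      rw [val_inr S hr] at * <;> simp only [List.length_append] at * <;> omega

theorem rt_sub {S : SLP α n} {x y : Fin n × ℕ} (h : RT S x y) (U : List α)
    (hx : S.val x.1 = (U.drop x.2).take (S.val x.1).length) :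
    S.val y.1 = (U.drop y.2).take (S.val y.1).length := by
  induction h with
  | refl => exact hx
  | @tail c z _ hstep ih =>
    obtain ⟨l, r, hr, hy | hy⟩ := hstep
    · subst hy
      have h1 : S.val l = List.take (S.val l).length (S.val l ++ S.val r) :=
        List.take_left.symm
      rw [val_inr S hr] at ih
      rw [ih, List.take_take] at h1
      have hmin : (S.val l).length ⊓ (S.val l ++ S.val r).length = (S.val l).length := by
        simp
      rw [hmin] at h1
      simpa using h1
    · subst hy
      have h2 : S.val r = List.drop (S.val l).length (S.val l ++ S.val r) :=
        List.drop_left.symm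
      rw [val_inr S hr] at ih
      rw [ih, List.drop_take, List.drop_drop] at h2
      have hmin : (S.val l ++ S.val r).length - (S.val l).length = (S.val r).length := by
        simp
      rw [hmin] at h2
      simpa using h2

/-- The occurrence of `P` (of length `q`) at position `p` straddles the split point of the
variable-occurrence `x`. -/
def Strad (S : SLP α n) (q p : ℕ) (x : Fin n × ℕ) : Prop :=
  ∃ l r, S.rule x.1 = Sum.inr (l, r) ∧ x.2 + 1 ≤ p ∧
    p + q - 1 ≤ x.2 + (S.val x.1).length ∧
    p ≤ x.2 + (S.val l).length ∧ x.2 + (S.val l).length < p + q - 1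

theorem strad_unique (S : SLP α n) {q p : ℕ} (hq : 2 ≤ q) (x y₁ y₂ : Fin n × ℕ)
    (h1 : RT S x y₁) (h2 : RT S x y₂)
    (s1 : Strad S q p y₁) (s2 : Strad S q p y₂) : y₁ = y₂ := by
  rcases h1.cases_head with rfl | ⟨c₁, hs₁, hr₁⟩
  · -- y₁ = x
    rcases h2.cases_head with rfl | ⟨c₂, hs₂, hr₂⟩
    · rfl
    · exfalso
      obtain ⟨l, r, hrule, hb1, hb2, hb3, hb4⟩ := s1
      obtain ⟨l', r', hrule', hc⟩ := hs₂
      rw [hrule] at hrule'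
      simp only [Sum.inr.injEq, Prod.mk.injEq] at hrule'
      obtain ⟨rfl, rfl⟩ := hrule'
      obtain ⟨hn1, hn2⟩ := rt_nest hr₂
      obtain ⟨l2, r2, hrule2, hc1, hc2, hc3, hc4⟩ := s2
      rcases hc with rfl | rfl
      · -- c₂ = (l, x.2): y₂ inside left child
        rw [val_inr S hrule] at hb2
        simp only [List.length_append] at *
        omega
      · -- c₂ = (r, x.2 + L): y₂ inside right child
        simp only at hn1
        omega
  · rcases h2.cases_head with rfl | ⟨c₂, hs₂, hr₂⟩
    · exfalso
      obtain ⟨l, r, hrule, hb1, hb2, hb3, hb4⟩ := s2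
      obtain ⟨l', r', hrule', hc⟩ := hs₁
      rw [hrule] at hrule'
      simp only [Sum.inr.injEq, Prod.mk.injEq] at hrule'
      obtain ⟨rfl, rfl⟩ := hrule'
      obtain ⟨hn1, hn2⟩ := rt_nest hr₁
      obtain ⟨l2, r2, hrule2, hc1, hc2, hc3, hc4⟩ := s1
      rcases hc with rfl | rfl
      · rw [val_inr S hrule] at hb2
        simp only [List.length_append] at *
        omega
      · simp only at hn1
        omega
    · -- both go through children
      obtain ⟨l, r, hrule, hc1⟩ := hs₁
      obtain ⟨l', r', hrule', hc2⟩ := hs₂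
      rw [hrule] at hrule'
      simp only [Sum.inr.injEq, Prod.mk.injEq] at hrule'
      obtain ⟨rfl, rfl⟩ := hrule'
      have hll : (l : Fin n).val < x.1.val := (S.wf _ _ _ hrule).1
      have hrr : (r : Fin n).val < x.1.val := (S.wf _ _ _ hrule).2
      rcases hc1 with rfl | rfl <;> rcases hc2 with rfl | rfl
      · exact strad_unique S hq _ y₁ y₂ hr₁ hr₂ s1 s2
      · -- y₁ in left subtree, y₂ in right subtree
        exfalso
        obtain ⟨hn1, hn2⟩ := rt_nest hr₁
        obtain ⟨hm1, hm2⟩ := rt_nest hr₂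
        obtain ⟨a1, b1, hrA, hA1, hA2, hA3, hA4⟩ := s1
        obtain ⟨a2, b2, hrB, hB1, hB2, hB3, hB4⟩ := s2
        simp only at hn1 hn2 hm1 hm2
        omega
      · exfalso
        obtain ⟨hn1, hn2⟩ := rt_nest hr₁
        obtain ⟨hm1, hm2⟩ := rt_nest hr₂
        obtain ⟨a1, b1, hrA, hA1, hA2, hA3, hA4⟩ := s1
        obtain ⟨a2, b2, hrB, hB1, hB2, hB3, hB4⟩ := s2
        simp only at hn1 hn2 hm1 hm2
        omega
      · exact strad_unique S hq _ y₁ y₂ hr₁ hr₂ s1 s2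
termination_by x.1.val
decreasing_by
  · exact hll
  · exact hrr

theorem strad_exists (S : SLP α n) {q p : ℕ} (hq : 2 ≤ q) (x : Fin n × ℕ)
    (h1 : x.2 + 1 ≤ p) (h2 : p + q - 1 ≤ x.2 + (S.val x.1).length) :
    ∃ y, RT S x y ∧ Strad S q p y := by
  cases hr : S.rule x.1 with
  | inl a =>
    exfalso
    have := val_inl S hr
    rw [this] at h2
    simp at h2
    omega
  | inr lr =>
    obtain ⟨l, r⟩ := lr
    have hlen : (S.val x.1).length = (S.val l).length + (S.val r).length := by
      rw [val_inr S hr, List.length_append]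
    by_cases hL : p + q - 1 ≤ x.2 + (S.val l).length
    · have hll : (l : Fin n).val < x.1.val := (S.wf _ _ _ hr).1
      obtain ⟨y, hy1, hy2⟩ := strad_exists S hq (l, x.2) h1 hL
      exact ⟨y, Relation.ReflTransGen.head ⟨l, r, hr, Or.inl rfl⟩ hy1, hy2⟩
    · by_cases hR : x.2 + (S.val l).length + 1 ≤ p
      · have hrr : (r : Fin n).val < x.1.val := (S.wf _ _ _ hr).2
        obtain ⟨y, hy1, hy2⟩ := strad_exists S hq (r, x.2 + (S.val l).length) hR (by
          simp only
          omega)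
        exact ⟨y, Relation.ReflTransGen.head ⟨l, r, hr, Or.inr rfl⟩ hy1, hy2⟩
      · exact ⟨x, Relation.ReflTransGen.refl,
          ⟨l, r, hr, h1, h2, by omega, by omega⟩⟩
termination_by x.1.val
decreasing_by
  · exact hll
  · exact hrr

theorem mem_Occ_iff {T P : List α} {q p : ℕ} (hP : P.length = q) (hq : 1 ≤ q) :
    p ∈ Occ T P ↔ 1 ≤ p ∧ (T.drop (p - 1)).take q = P := by
  have harith : p + P.length - 1 + 1 - p = q := by omega
  simp only [Occ, Set.mem_setOf_eq, substr, harith]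

theorem occ_bound {T P : List α} {q p : ℕ} (hP : P.length = q) (hq : 1 ≤ q)
    (h : p ∈ Occ T P) : 1 ≤ p ∧ p + q - 1 ≤ T.length := by
  rw [mem_Occ_iff hP hq] at h
  obtain ⟨h1, h2⟩ := h
  refine ⟨h1, ?_⟩
  have := congrArg List.length h2
  simp only [List.length_take, List.length_drop, hP] at this
  omega

theorem occ_finite {T P : List α} {q : ℕ} (hP : P.length = q) (hq : 1 ≤ q) :
    (Occ T P).Finite := by
  apply Set.Finite.subset (Set.finite_Icc 1 T.length)
  intro p hp
  have := occ_bound hP hq hp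
  simp only [Set.mem_Icc]
  omega

theorem occ_window {T P : List α} {q s w k : ℕ} (hP : P.length = q) (hq : 1 ≤ q) :
    k ∈ Occ ((T.drop s).take w) P ↔ s + k ∈ Occ T P ∧ 1 ≤ k ∧ k + q - 1 ≤ w := by
  rw [mem_Occ_iff hP hq, mem_Occ_iff hP hq]
  constructor
  · rintro ⟨hk, heq⟩
    rw [List.drop_take, List.drop_drop] at heq
    rw [List.take_take] at heq
    have hlen := congrArg List.length heq
    simp only [List.length_take, List.length_drop, hP] at hlen
    have h1 : q ≤ w - (k - 1) := by omega
    have h2 : q ⊓ (w - (k - 1)) = q := by omega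
    rw [h2] at heq
    have hsk : s + (k - 1) = s + k - 1 := by omega
    rw [hsk] at heq
    exact ⟨⟨by omega, heq⟩, hk, by omega⟩
  · rintro ⟨⟨_, heq⟩, hk, hkw⟩
    refine ⟨hk, ?_⟩
    rw [List.drop_take, List.drop_drop, List.take_take]
    have h2 : q ⊓ (w - (k - 1)) = q := by omega
    rw [h2]
    have hsk : s + (k - 1) = s + k - 1 := by omega
    rw [hsk]
    exact heq

theorem itv_eq (S : SLP α n) (hn : 0 < n) (i : Fin n) :
    S.itv i = (fun o => (o + 1, o + (S.val i).length)) ''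
      {o | RT S (⟨n - 1, Nat.sub_lt hn one_pos⟩, 0) (i, o)} := by
  set rt : Fin n := ⟨n - 1, Nat.sub_lt hn one_pos⟩ with hrt
  rw [SLP.itv]
  split_ifs with hroot
  · -- i is the root
    have hi : i = rt := Fin.ext (by simp [hrt, hroot])
    have hset : {o | RT S (rt, 0) (i, o)} = {0} := by
      ext o
      simp only [Set.mem_setOf_eq, Set.mem_singleton_iff]
      constructor
      · intro hr
        have h := rt_eq_of_fst hr (by simp [hi])
        exact (congrArg Prod.snd h)
      · rintro rfl
        rw [hi]
        exact Relation.ReflTransGen.refl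
    rw [hset]
    simp
  · ext p
    simp only [Set.mem_union, Set.mem_setOf_eq, Set.mem_image]
    constructor
    · rintro (⟨k, l, hk, uv, huv, rfl⟩ | ⟨k, r, hk, uv, huv, rfl⟩)
      · have hik : (i : Fin n).val < k.val := (S.wf _ _ _ hk).2
        rw [itv_eq S hn k] at huv
        obtain ⟨o, ho, rfl⟩ := huv
        refine ⟨o + (S.val l).length, ?_, ?_⟩
        · exact ho.tail ⟨l, i, hk, Or.inr rfl⟩
        · have hlen : (S.val k).length = (S.val l).length + (S.val i).length := by
            rw [val_inr S hk, List.length_append]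
          simp only [Prod.mk.injEq, true_and, and_true] <;> omega
      · have hik : (i : Fin n).val < k.val := (S.wf _ _ _ hk).1
        rw [itv_eq S hn k] at huv
        obtain ⟨o, ho, rfl⟩ := huv
        refine ⟨o, ?_, ?_⟩
        · exact ho.tail ⟨i, r, hk, Or.inl rfl⟩
        · have hpos := val_pos S i
          simp only [Prod.mk.injEq, true_and, and_true] <;> omega
    · rintro ⟨o, ho, rfl⟩
      rcases ho.cases_tail with heq | ⟨c, hc, hstep⟩
      · exfalso
        apply hroot
        have : i = rt := congrArg Prod.fst heq
        simp [this, hrt]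
      · obtain ⟨l, r, hrule, hio | hio⟩ := hstep
        · -- (i, o) = (l, c.2) : i is the left child of c.1
          have hil : i = l := congrArg Prod.fst hio
          have hoc : o = c.2 := congrArg Prod.snd hio
          subst hil hoc
          have hik : (i : Fin n).val < c.1.val := (S.wf _ _ _ hrule).1
          right
          refine ⟨c.1, r, hrule, (c.2 + 1, c.2 + (S.val c.1).length), ?_, ?_⟩
          · rw [itv_eq S hn c.1]
            exact ⟨c.2, hc, rfl⟩
          · have hpos := val_pos S i
            simp only [Prod.mk.injEq, true_and, and_true] <;> omega
        · -- (i, o) = (r, c.2 + |val l|)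
          have hil : i = r := congrArg Prod.fst hio
          have hoc : o = c.2 + (S.val l).length := congrArg Prod.snd hio
          subst hil hoc
          have hik : (i : Fin n).val < c.1.val := (S.wf _ _ _ hrule).2
          left
          refine ⟨c.1, l, hrule, (c.2 + 1, c.2 + (S.val c.1).length), ?_, ?_⟩
          · rw [itv_eq S hn c.1]
            exact ⟨c.2, hc, rfl⟩
          · have hlen : (S.val c.1).length = (S.val l).length + (S.val i).length := by
              rw [val_inr S hrule, List.length_append]
            simp only [Prod.mk.injEq, true_and, and_true] <;> omega
termination_by n - i.val
decreasing_by
  all_goals first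
    | (have h2 := k.isLt; omega)
    | (have h2 := c.1.isLt; omega)

theorem vOcc_eq (S : SLP α n) (hn : 0 < n) (i : Fin n) :
    S.vOcc i = {o | RT S (⟨n - 1, Nat.sub_lt hn one_pos⟩, 0) (i, o)}.ncard := by
  rw [SLP.vOcc, itv_eq S hn i]
  exact Set.ncard_image_of_injective _ (fun a b hab => by
    have := congrArg Prod.fst hab
    simpa using this)

theorem tstr_inr (S : SLP α n) {i l r : Fin n} (q : ℕ) (h : S.rule i = Sum.inr (l, r)) :
    S.tstr q i = suf (S.val l) (q - 1) ++ pre (S.val r) (q - 1) := by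
  rw [SLP.tstr]; split <;> simp_all

theorem tstr_window (S : SLP α n) (hn : 0 < n) {q : ℕ} (hq : 2 ≤ q) {x : Fin n × ℕ}
    {l r : Fin n} (hrule : S.rule x.1 = Sum.inr (l, r))
    (hx : RT S (⟨n - 1, Nat.sub_lt hn one_pos⟩, 0) x) :
    S.tstr q x.1 =
      (((S.val ⟨n - 1, Nat.sub_lt hn one_pos⟩).drop
        (x.2 + (S.val l).length - min (q - 1) (S.val l).length)).take
        (min (q - 1) (S.val l).length + min (q - 1) (S.val r).length)) := by
  set rt : Fin n := ⟨n - 1, Nat.sub_lt hn one_pos⟩ with hrtdef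
  set T : List α := S.val rt with hTdef
  set L : ℕ := (S.val l).length with hLdef
  set R : ℕ := (S.val r).length with hRdef
  set m : ℕ := min (q - 1) L with hmdef
  set m' : ℕ := min (q - 1) R with hm'def
  have hT : S.val rt = (T.drop 0).take (S.val rt).length := by
    simp [hTdef]
  have hl : RT S (rt, 0) (l, x.2) := hx.tail ⟨l, r, hrule, Or.inl rfl⟩
  have hr : RT S (rt, 0) (r, x.2 + L) := hx.tail ⟨l, r, hrule, Or.inr rfl⟩
  have hvl : S.val l = (T.drop x.2).take L := rt_sub hl T hT
  have hvr : S.val r = (T.drop (x.2 + L)).take R := rt_sub hr T hT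
  rw [tstr_inr S q hrule]
  have hsuf : suf (S.val l) (q - 1) =
      (T.drop (x.2 + L - m)).take m := by
    rw [suf, ← hLdef, hvl, List.drop_take, List.drop_drop]
    have e1 : L - (L - (q - 1)) = m := by omega
    have e2 : x.2 + (L - (q - 1)) = x.2 + L - m := by omega
    rw [e1, e2]
  have hpre : pre (S.val r) (q - 1) =
      (T.drop (x.2 + L)).take m' := by
    rw [pre, hvr, List.take_take]
  rw [hsuf, hpre, List.take_add, List.drop_drop]
  have e3 : x.2 + L - m + m = x.2 + L := by omega
  rw [e3]

theorem cross_eq (S : SLP α n) (hn : 0 < n) {q : ℕ} (hq : 2 ≤ q) {P : List α}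
    (hP : P.length = q) {x : Fin n × ℕ} {l r : Fin n}
    (hrule : S.rule x.1 = Sum.inr (l, r))
    (hx : RT S (⟨n - 1, Nat.sub_lt hn one_pos⟩, 0) x) :
    {p | p ∈ Occ (S.val ⟨n - 1, Nat.sub_lt hn one_pos⟩) P ∧ Strad S q p x} =
      (fun k => x.2 + (S.val l).length - min (q - 1) (S.val l).length + k) ''
        Occ (S.tstr q x.1) P := by
  set rt : Fin n := ⟨n - 1, Nat.sub_lt hn one_pos⟩ with hrtdef
  set T : List α := S.val rt with hTdef
  set L : ℕ := (S.val l).length with hLdef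
  set R : ℕ := (S.val r).length with hRdef
  set m : ℕ := min (q - 1) L with hmdef
  set m' : ℕ := min (q - 1) R with hm'def
  have hlen : (S.val x.1).length = L + R := by
    rw [val_inr S hrule, List.length_append]
  have hnest := rt_nest hx
  have hwin := tstr_window S hn hq hrule hx
  ext p
  simp only [Set.mem_setOf_eq, Set.mem_image]
  constructor
  · rintro ⟨hocc, l2, r2, hrule2, hb1, hb2, hb3, hb4⟩
    rw [hrule] at hrule2
    simp only [Sum.inr.injEq, Prod.mk.injEq] at hrule2
    obtain ⟨rfl, rfl⟩ := hrule2
    refine ⟨p - (x.2 + L - m), ?_, by omega⟩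
    rw [hwin, occ_window hP (by omega)]
    rw [hlen] at hb2
    have hkey : x.2 + L - m + (p - (x.2 + L - m)) = p := by omega
    rw [hkey]
    exact ⟨hocc, by omega, by omega⟩
  · rintro ⟨k, hk, rfl⟩
    rw [hwin, occ_window hP (by omega)] at hk
    obtain ⟨hocc, hk1, hk2⟩ := hk
    refine ⟨hocc, l, r, hrule, by omega, ?_, by omega, by omega⟩
    rw [hlen]
    omega

end SLPAux

/-- correctness of the main algorithm: for `q ≥ 2` and every `q`-gram `P`,
`|Occ(T,P)| = Σ_{i : X_i = X_ℓ X_r} vOcc(X_i) · |Occ(t_i, P)|`. -/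
theorem slp_qgram_frequency {α : Type*} {n : ℕ} (S : SLP α n) (hn : 0 < n)
    (q : ℕ) (hq : 2 ≤ q) (P : List α) (hP : P.length = q) :
    (Occ (S.val ⟨n - 1, Nat.sub_lt hn one_pos⟩) P).ncard =
      ∑ i : Fin n,
        (match S.rule i with
          | Sum.inl _ => 0
          | Sum.inr _ => S.vOcc i * (Occ (S.tstr q i) P).ncard) := by
  classical
  set rt : Fin n := ⟨n - 1, Nat.sub_lt hn one_pos⟩ with hrtdef
  set T : List α := S.val rt with hTdef
  set A : Fin n → Set ℕ := fun i =>
    {p | p ∈ Occ T P ∧ ∃ o, SLPAux.RT S (rt, 0) (i, o) ∧ SLPAux.Strad S q p (i, o)} with hA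
  have hq1 : 1 ≤ q := by omega
  have hOccFin : (Occ T P).Finite := SLPAux.occ_finite hP hq1
  have hAfin : ∀ i, (A i).Finite := fun i => hOccFin.subset (fun p hp => hp.1)
  have hcover : Occ T P = ⋃ i, A i := by
    ext p
    simp only [Set.mem_iUnion]
    constructor
    · intro hp
      have hb := SLPAux.occ_bound hP hq1 hp
      obtain ⟨y, hy1, hy2⟩ := SLPAux.strad_exists S hq (rt, 0)
        (by simpa using hb.1) (by simpa using hb.2)
      exact ⟨y.1, hp, y.2, hy1, hy2⟩
    · rintro ⟨i, hp, _⟩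
      exact hp
  have hdisj : ∀ i j : Fin n, i ≠ j → ∀ p, p ∈ A i → p ∈ A j → False := by
    intro i j hij p hpi hpj
    obtain ⟨_, o1, ho1, hs1⟩ := hpi
    obtain ⟨_, o2, ho2, hs2⟩ := hpj
    have := SLPAux.strad_unique S hq (rt, 0) (i, o1) (j, o2) ho1 ho2 hs1 hs2
    exact hij (congrArg Prod.fst this)
  -- convert to Finset counting
  have hcard : (Occ T P).ncard = ∑ i : Fin n, (A i).ncard := by
    have h1 : Occ T P = ↑(Finset.univ.biUnion fun i => (hAfin i).toFinset) := by
      rw [hcover]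
      ext p
      simp [Set.Finite.mem_toFinset]
    rw [h1, Set.ncard_coe_finset, Finset.card_biUnion]
    · exact Finset.sum_congr rfl fun i _ =>
        (Set.ncard_eq_toFinset_card (A i) (hAfin i)).symm
    · intro i _ j _ hij
      rw [Function.onFun, Finset.disjoint_left]
      intro p hp1 hp2
      exact hdisj i j hij p ((hAfin i).mem_toFinset.mp hp1) ((hAfin j).mem_toFinset.mp hp2)
  rw [hcard]
  refine Finset.sum_congr rfl fun i _ => ?_
  rcases hr : S.rule i with a | ⟨l, r⟩
  · -- terminal: A i is empty
    have hempty : A i = ∅ := by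
      ext p
      simp only [hA, Set.mem_setOf_eq, Set.mem_empty_iff_false, iff_false, not_and]
      rintro _ ⟨o, _, l', r', hrule', _⟩
      rw [hr] at hrule'
      exact absurd hrule' (by simp)
    rw [hempty]
    simp [hr]
  · -- concatenation
    set O : Set ℕ := {o | SLPAux.RT S (rt, 0) (i, o)} with hO
    have hOfin : O.Finite := by
      apply Set.Finite.subset (Set.finite_Icc 0 T.length)
      intro o ho
      have hnest := SLPAux.rt_nest ho
      have hpos := SLPAux.val_pos S i
      have hTlen : (S.val rt).length = T.length := by rw [hTdef]
      simp only [Set.mem_Icc]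
      simp only at hnest
      omega
    have htFin : (Occ (S.tstr q i) P).Finite := SLPAux.occ_finite hP hq1
    set g : ℕ × ℕ → ℕ := fun ok =>
      ok.1 + (S.val l).length - min (q - 1) (S.val l).length + ok.2 with hg
    have himg : A i = g '' (O ×ˢ Occ (S.tstr q i) P) := by
      ext p
      simp only [hA, Set.mem_setOf_eq, Set.mem_image, Set.mem_prod]
      constructor
      · rintro ⟨hocc, o, ho, hstrad⟩
        have hce := SLPAux.cross_eq S hn hq hP (x := (i, o)) hr ho
        have hp : p ∈ (fun k => (i, o).2 + (S.val l).length -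
            min (q - 1) (S.val l).length + k) '' Occ (S.tstr q (i, o).1) P := by
          rw [← hce]
          exact ⟨hocc, hstrad⟩
        obtain ⟨k, hk, hpk⟩ := hp
        exact ⟨(o, k), ⟨ho, hk⟩, hpk⟩
      · rintro ⟨⟨o, k⟩, ⟨ho, hk⟩, rfl⟩
        have hce := SLPAux.cross_eq S hn hq hP (x := (i, o)) hr ho
        have hp : g (o, k) ∈ {p | p ∈ Occ T P ∧ SLPAux.Strad S q p (i, o)} := by
          rw [hce]
          exact ⟨k, hk, rfl⟩
        exact ⟨hp.1, o, ho, hp.2⟩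
    have hinj : Set.InjOn g (O ×ˢ Occ (S.tstr q i) P) := by
      rintro ⟨o1, k1⟩ ⟨ho1, hk1⟩ ⟨o2, k2⟩ ⟨ho2, hk2⟩ hgeq
      have hce1 := SLPAux.cross_eq S hn hq hP (x := (i, o1)) hr ho1
      have hce2 := SLPAux.cross_eq S hn hq hP (x := (i, o2)) hr ho2
      have h1 : g (o1, k1) ∈ {p | p ∈ Occ T P ∧ SLPAux.Strad S q p (i, o1)} := by
        rw [hce1]; exact ⟨k1, hk1, rfl⟩
      have h2 : g (o1, k1) ∈ {p | p ∈ Occ T P ∧ SLPAux.Strad S q p (i, o2)} := by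
        rw [hgeq, hce2]; exact ⟨k2, hk2, rfl⟩
      have huniq := SLPAux.strad_unique S hq (rt, 0) (i, o1) (i, o2) ho1 ho2 h1.2 h2.2
      have hoeq : o1 = o2 := congrArg Prod.snd huniq
      subst hoeq
      have hkeq : k1 = k2 := by
        simp only [hg] at hgeq
        omega
      rw [hkeq]
    rw [himg, Set.ncard_image_of_injOn hinj]
    have hprod : (O ×ˢ Occ (S.tstr q i) P).ncard = O.ncard * (Occ (S.tstr q i) P).ncard := by
      rw [Set.ncard_eq_toFinset_card _ (hOfin.prod htFin),
        ← Set.Finite.toFinset_prod hOfin htFin, Finset.card_product,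
        ← Set.ncard_eq_toFinset_card _ hOfin, ← Set.ncard_eq_toFinset_card _ htFin]
    rw [hprod, ← SLPAux.vOcc_eq S hn i]
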